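/- Let Γ be a fine grading by an abelian group on a Jordan pair V, realized over its universal group G. Then there exists a group homomorphism π : G → ℤ such that π(g) = 1 whenever V⁺_g ≠ 0 and π(g) = -1 whenever V⁻_g ≠ 0. In particular, the supports of Γ restricted to V⁺ and to V⁻ are disjoint. -/

import Mathlib

/-- A (linear) Jordan pair over a field `F`. -/
structure JordanPair (F : Type) [Field F] (Vp Vm : Type)
    [AddCommGroup Vp] [Module F Vp] [AddCommGroup Vm] [Module F Vm] where
  Dp : Vp →ₗ[F] Vm →ₗ[F] Vp →ₗ[F] Vp
  Dm : Vm →ₗ[F] Vp →ₗ[F] Vm →ₗ[F] Vm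
  symm_p : ∀ x y z, Dp x y z = Dp z y x
  symm_m : ∀ x y z, Dm x y z = Dm z y x
  ljp2_p : ∀ x y u v z,
    Dp x y (Dp u v z) - Dp u v (Dp x y z) = Dp (Dp x y u) v z - Dp u (Dm y x v) z
  ljp2_m : ∀ x y u v z,
    Dm x y (Dm u v z) - Dm u v (Dm x y z) = Dm (Dm x y u) v z - Dm u (Dp y x v) z

/-- A grading of a Jordan pair by an abelian group `G`. -/
structure JPGrading {F : Type} [Field F] {Vp Vm : Type}
    [AddCommGroup Vp] [Module F Vp] [AddCommGroup Vm] [Module F Vm]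
    (G : Type) [AddCommGroup G] [DecidableEq G] (P : JordanPair F Vp Vm) where
  gp : G → Submodule F Vp
  gm : G → Submodule F Vm
  int_p : DirectSum.IsInternal gp
  int_m : DirectSum.IsInternal gm
  mul_p : ∀ g h k, ∀ x ∈ gp g, ∀ y ∈ gm h, ∀ z ∈ gp k, P.Dp x y z ∈ gp (g + h + k)
  mul_m : ∀ g h k, ∀ x ∈ gm g, ∀ y ∈ gp h, ∀ z ∈ gm k, P.Dm x y z ∈ gm (g + h + k)

variable {F : Type} [Field F] {Vp Vm : Type}
    [AddCommGroup Vp] [Module F Vp] [AddCommGroup Vm] [Module F Vm]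
    {P : JordanPair F Vp Vm}

/-- `Δ` is a refinement of `Γ`. -/
def JPGrading.Refines {H G : Type} [AddCommGroup H] [DecidableEq H]
    [AddCommGroup G] [DecidableEq G]
    (Δ : JPGrading H P) (Γ : JPGrading G P) : Prop :=
  ∀ h : H, ∃ g : G, Δ.gp h ≤ Γ.gp g ∧ Δ.gm h ≤ Γ.gm g

/-- A fine grading: any (abelian group) refinement of `Γ` has the same
homogeneous components, i.e. is in turn refined by `Γ`. -/
def JPGrading.IsFine {G : Type} [AddCommGroup G] [DecidableEq G]
    (Γ : JPGrading G P) : Prop :=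
  ∀ (H : Type) [AddCommGroup H] [DecidableEq H] (Δ : JPGrading H P),
    Δ.Refines Γ → Γ.Refines Δ

/-- Two gradings have the same homogeneous components. -/
def JPGrading.SameComponents {G H : Type} [AddCommGroup G] [DecidableEq G]
    [AddCommGroup H] [DecidableEq H]
    (Γ : JPGrading G P) (Δ : JPGrading H P) : Prop :=
  (∀ g, (Γ.gp g ≠ ⊥ ∨ Γ.gm g ≠ ⊥) → ∃ h, Δ.gp h = Γ.gp g ∧ Δ.gm h = Γ.gm g) ∧
  (∀ h, (Δ.gp h ≠ ⊥ ∨ Δ.gm h ≠ ⊥) → ∃ g, Γ.gp g = Δ.gp h ∧ Γ.gm g = Δ.gm h)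

/-- The universal property of the universal group of a grading: any realization
of the same decomposition as a grading by another abelian group is induced by a
unique group homomorphism which is the identity on the support. -/
def JPGrading.IsUniversal {G : Type} [AddCommGroup G] [DecidableEq G]
    (Γ : JPGrading G P) : Prop :=
  ∀ (H : Type) [AddCommGroup H] [DecidableEq H] (Δ : JPGrading H P),
    Γ.SameComponents Δ →
    ∃! φ : G →+ H, ∀ g, (Γ.gp g ≠ ⊥ ∨ Γ.gm g ≠ ⊥) →
      Δ.gp (φ g) = Γ.gp g ∧ Δ.gm (φ g) = Γ.gm g

/-- For a fine grading `Γ` on a Jordan pair realized over its universal group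
`G`, there is a group homomorphism `π : G → ℤ` with `π(g) = 1` whenever
`V⁺_g ≠ 0` and `π(g) = -1` whenever `V⁻_g ≠ 0`; in particular the supports of
`Γ` on `V⁺` and `V⁻` are disjoint. -/
private lemma internal_lift {F M G : Type} [Field F] [AddCommGroup M] [Module F M]
    [AddCommGroup G] [DecidableEq G]
    (c : ℤ) (f : G → Submodule F M) (hf : DirectSum.IsInternal f) :
    DirectSum.IsInternal (fun p : G × ℤ => if p.2 = c then f p.1 else ⊥) := by
  rw [DirectSum.isInternal_submodule_iff_iSupIndep_and_iSup_eq_top] at hf ⊢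
  obtain ⟨hind, hsup⟩ := hf
  constructor
  · intro p
    by_cases h : p.2 = c
    · simp only [h, if_pos rfl]
      refine (hind p.1).mono_right (iSup₂_le fun q hq => ?_)
      by_cases hq2 : q.2 = c
      · simp only [hq2, if_pos rfl]
        have : q.1 ≠ p.1 := fun he => hq (Prod.ext he (hq2.trans h.symm))
        exact le_iSup₂ (f := fun j (_ : j ≠ p.1) => f j) q.1 this
      · simp [hq2]
    · simp [h]
  · refine le_antisymm le_top ?_
    rw [← hsup]
    refine iSup_le fun g => ?_
    refine le_trans ?_ (le_iSup _ (g, c))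
    simp

/-- The refinement of `Γ` over `G × ℤ` splitting the plus and minus parts. -/
private def refineZ {G : Type} [AddCommGroup G] [DecidableEq G]
    (Γ : JPGrading G P) : JPGrading (G × ℤ) P where
  gp p := if p.2 = 1 then Γ.gp p.1 else ⊥
  gm p := if p.2 = -1 then Γ.gm p.1 else ⊥
  int_p := internal_lift 1 Γ.gp Γ.int_p
  int_m := internal_lift (-1) Γ.gm Γ.int_m
  mul_p := by
    rintro ⟨g, a⟩ ⟨h, b⟩ ⟨k, c⟩ x hx y hy z hz
    simp only at hx hy hz ⊢
    by_cases ha : a = 1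
    · by_cases hb : b = -1
      · by_cases hc : c = 1
        · rw [if_pos ha] at hx; rw [if_pos hb] at hy; rw [if_pos hc] at hz
          subst ha hb hc
          have he : ((g, (1:ℤ)) + (h, -1) + (k, 1)) = (g + h + k, 1) := rfl
          rw [he, if_pos rfl]
          exact Γ.mul_p g h k x hx y hy z hz
        · rw [if_neg hc] at hz
          obtain rfl : z = 0 := by simpa using hz
          simp only [map_zero]
          exact Submodule.zero_mem _
      · rw [if_neg hb] at hy
        obtain rfl : y = 0 := by simpa using hy
        simp only [map_zero, LinearMap.zero_apply]
        exact Submodule.zero_mem _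
    · rw [if_neg ha] at hx
      obtain rfl : x = 0 := by simpa using hx
      simp only [map_zero, LinearMap.zero_apply]
      exact Submodule.zero_mem _
  mul_m := by
    rintro ⟨g, a⟩ ⟨h, b⟩ ⟨k, c⟩ x hx y hy z hz
    simp only at hx hy hz ⊢
    by_cases ha : a = -1
    · by_cases hb : b = 1
      · by_cases hc : c = -1
        · rw [if_pos ha] at hx; rw [if_pos hb] at hy; rw [if_pos hc] at hz
          subst ha hb hc
          have he : ((g, (-1:ℤ)) + (h, 1) + (k, -1)) = (g + h + k, -1) := rfl
          rw [he, if_pos rfl]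
          exact Γ.mul_m g h k x hx y hy z hz
        · rw [if_neg hc] at hz
          obtain rfl : z = 0 := by simpa using hz
          simp only [map_zero]
          exact Submodule.zero_mem _
      · rw [if_neg hb] at hy
        obtain rfl : y = 0 := by simpa using hy
        simp only [map_zero, LinearMap.zero_apply]
        exact Submodule.zero_mem _
    · rw [if_neg ha] at hx
      obtain rfl : x = 0 := by simpa using hx
      simp only [map_zero, LinearMap.zero_apply]
      exact Submodule.zero_mem _


theorem stmt_3 {G : Type} [AddCommGroup G] [DecidableEq G]
    (Γ : JPGrading G P) (hfine : Γ.IsFine)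
    (hgen : AddSubgroup.closure {g : G | Γ.gp g ≠ ⊥ ∨ Γ.gm g ≠ ⊥} = ⊤)
    (huniv : Γ.IsUniversal) :
    ∃ π : G →+ ℤ,
      (∀ g, Γ.gp g ≠ ⊥ → π g = 1) ∧
      (∀ g, Γ.gm g ≠ ⊥ → π g = -1) ∧
      (∀ g, Γ.gp g = ⊥ ∨ Γ.gm g = ⊥) := by

  set Δ := refineZ Γ with hΔ
  have href : Δ.Refines Γ := by
    intro p
    refine ⟨p.1, ?_, ?_⟩ <;> · dsimp [Δ, refineZ]; split <;> simp
  have hback := hfine (G × ℤ) Δ href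
  -- disjointness of supports
  have hdisj : ∀ g, Γ.gp g = ⊥ ∨ Γ.gm g = ⊥ := by
    intro g
    by_contra hc
    push_neg at hc
    obtain ⟨hp, hm⟩ := hc
    obtain ⟨p, h1, h2⟩ := hback g
    have e1 : p.2 = 1 := by
      by_contra h
      rw [hΔ] at h1
      simp only [refineZ, if_neg h] at h1
      exact hp (le_bot_iff.mp h1)
    have e2 : p.2 = -1 := by
      by_contra h
      rw [hΔ] at h2
      simp only [refineZ, if_neg h] at h2
      exact hm (le_bot_iff.mp h2)
    rw [e1] at e2
    norm_num at e2
  have hsame : Γ.SameComponents Δ := by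
    constructor
    · intro g hg
      rcases hdisj g with h | h
      · refine ⟨(g, -1), ?_, ?_⟩ <;> simp [Δ, refineZ, h]
      · refine ⟨(g, 1), ?_, ?_⟩ <;> simp [Δ, refineZ, h]
    · rintro ⟨g, n⟩ hg
      refine ⟨g, ?_⟩
      simp only [Δ, refineZ] at hg ⊢
      rcases hg with hg | hg
      · have hn : n = 1 := by by_contra h; simp [h] at hg
        subst hn
        have hp : Γ.gp g ≠ ⊥ := by simpa using hg
        have hm : Γ.gm g = ⊥ := (hdisj g).resolve_left hp
        constructor <;> simp [hm]
      · have hn : n = -1 := by by_contra h; simp [h] at hg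
        subst hn
        have hm : Γ.gm g ≠ ⊥ := by simpa using hg
        have hp : Γ.gp g = ⊥ := (hdisj g).resolve_right hm
        constructor <;> simp [hp]
  obtain ⟨φ, hφ, -⟩ := huniv (G × ℤ) Δ hsame
  refine ⟨(AddMonoidHom.snd G ℤ).comp φ, ?_, ?_, hdisj⟩
  · intro g hg
    obtain ⟨h1, h2⟩ := hφ g (Or.inl hg)
    simp only [Δ, refineZ] at h1
    by_contra h
    have : (φ g).2 ≠ 1 := by simpa using h
    rw [if_neg this] at h1
    exact hg h1.symm
  · intro g hg
    obtain ⟨h1, h2⟩ := hφ g (Or.inr hg)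
    simp only [Δ, refineZ] at h2
    by_contra h
    have : (φ g).2 ≠ -1 := by simpa using h
    rw [if_neg this] at h2
    exact hg h2.symm
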